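/- Let x ∈ ℝ^K have nonnegative coordinates with x_i > 0, and for t > 0 define (using real powers) g(t) = φ_i(x)·(1 − 1/(t·Σ_{k∈V_i} x_k))^{t·x_i − 1}·∏_{j∈V_i∖{i}} (1 − 1/(t·Σ_{k∈V_j} x_k))^{t·x_j} (note that Σ_{k∈V_j} x_k ≥ x_i > 0 for every j ∈ V_i, so g(t) is well defined for t large). Then g(t) → φ_i(x)·exp(−Σ_{j∈V_i} φ_j(x)) as t → ∞. -/

import Mathlib

set_option maxHeartbeats 1000000


open Finset Filter Real

lemma aux1 (S a : ℝ) (hS : 0 < S) (ha : 0 ≤ a) :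
    Tendsto (fun t : ℝ => (1 - 1/(t*S)) ^ (t*a)) atTop (nhds (Real.exp (-(a/S)))) := by
  rcases ha.eq_or_lt with h | h
  · simp [← h]
  · have hm : Tendsto (fun t : ℝ => t * a) atTop atTop :=
      Tendsto.atTop_mul_const h tendsto_id
    have h0 := (tendsto_one_add_div_rpow_exp (-(a/S))).comp hm
    refine h0.congr' ?_
    filter_upwards [eventually_gt_atTop 0] with t ht
    have : (1 : ℝ) + -(a/S) / (t*a) = 1 - 1/(t*S) := by
      field_simp
      ring
    simp [Function.comp, this]


/-- The closed neighbourhood `V_i = {i} ∪ {j : (i,j) ∈ E}` of a vertex `i`. -/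
def closedNbhd {K : ℕ} (G : SimpleGraph (Fin K)) [DecidableRel G.Adj] (i : Fin K) :
    Finset (Fin K) :=
  insert i (G.neighborFinset i)

/-- `φ_i(x) = x_i / ∑_{j ∈ V_i} x_j`. -/
noncomputable def phi {K : ℕ} (G : SimpleGraph (Fin K)) [DecidableRel G.Adj]
    (x : Fin K → ℝ) (i : Fin K) : ℝ :=
  x i / ∑ j ∈ closedNbhd G i, x j

/-- For `x` with nonnegative coordinates and `x_i > 0`, the function (using real powers)
`g(t) = φ_i(x)(1 − 1/(t∑_{k∈V_i} x_k))^{t x_i − 1} ∏_{j∈V_i∖{i}} (1 − 1/(t∑_{k∈V_j} x_k))^{t x_j}`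
tends to `φ_i(x) exp(−∑_{j∈V_i} φ_j(x))` as `t → ∞`. -/
theorem stmt18 {K : ℕ} (G : SimpleGraph (Fin K)) [DecidableRel G.Adj]
    (x : Fin K → ℝ) (hnn : ∀ k, 0 ≤ x k) (i : Fin K) (hxi : 0 < x i) :
    Filter.Tendsto
      (fun t : ℝ =>
        phi G x i * (1 - 1 / (t * ∑ k ∈ closedNbhd G i, x k)) ^ (t * x i - 1) *
          ∏ j ∈ (closedNbhd G i).erase i,
            (1 - 1 / (t * ∑ k ∈ closedNbhd G j, x k)) ^ (t * x j))
      Filter.atTop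
      (nhds (phi G x i * Real.exp (-∑ j ∈ closedNbhd G i, phi G x j))) := by
  set S : Fin K → ℝ := fun j => ∑ k ∈ closedNbhd G j, x k with hSdef
  have hii : i ∈ closedNbhd G i := Finset.mem_insert_self _ _
  have hmem : ∀ j ∈ closedNbhd G i, i ∈ closedNbhd G j := by
    intro j hj
    simp only [closedNbhd, Finset.mem_insert, SimpleGraph.mem_neighborFinset] at hj ⊢
    rcases hj with rfl | hj
    · exact Or.inl rfl
    · exact Or.inr (G.adj_symm hj)
  have hS : ∀ j ∈ closedNbhd G i, 0 < S j := fun j hj =>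
    lt_of_lt_of_le hxi (Finset.single_le_sum (fun k _ => hnn k) (hmem j hj))
  -- limit of the i-term
  have hSi := hS i hii
  have hbase : Tendsto (fun t : ℝ => 1 - 1/(t * S i)) atTop (nhds 1) := by
    have : Tendsto (fun t : ℝ => 1/(t * S i)) atTop (nhds 0) :=
      Tendsto.comp tendsto_inv_atTop_zero (Tendsto.atTop_mul_const hSi tendsto_id) |>.congr
        (fun t => (one_div _).symm)
    simpa using (tendsto_const_nhds (x := (1:ℝ))).sub this
  have hi0 : Tendsto (fun t : ℝ => (1 - 1/(t * S i)) ^ (t * x i - 1)) atTop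
      (nhds (Real.exp (-(x i / S i)))) := by
    have hdiv := (aux1 (S i) (x i) hSi hxi.le).div hbase one_ne_zero
    rw [div_one] at hdiv
    refine hdiv.congr' ?_
    have hev : ∀ᶠ t : ℝ in atTop, 1 < t * S i :=
      (Tendsto.atTop_mul_const hSi (tendsto_id (α := ℝ))).eventually_gt_atTop 1
    filter_upwards [hev] with t ht
    have hpos : 0 < 1 - 1/(t * S i) := by
      have : 1/(t * S i) < 1 := by
        rw [div_lt_one (lt_trans one_pos ht)]; exact ht
      linarith
    simp only [Pi.div_apply]
    rw [Real.rpow_sub hpos, Real.rpow_one]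
  -- limit of the product
  have hprod : Tendsto (fun t : ℝ => ∏ j ∈ (closedNbhd G i).erase i,
      (1 - 1/(t * S j)) ^ (t * x j)) atTop
      (nhds (∏ j ∈ (closedNbhd G i).erase i, Real.exp (-(x j / S j)))) := by
    refine tendsto_finset_prod _ (fun j hj => ?_)
    exact aux1 (S j) (x j) (hS j (Finset.mem_of_mem_erase hj)) (hnn j)
  have h := ((tendsto_const_nhds (x := phi G x i)).mul hi0).mul hprod
  have hSapp : ∀ j, (∑ k ∈ closedNbhd G j, x k) = S j := fun j => rfl
  have key : (-∑ j ∈ closedNbhd G i, phi G x j)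
      = (-(x i / S i)) + ∑ j ∈ (closedNbhd G i).erase i, -(x j / S j) := by
    have hsplit := Finset.sum_erase_add (closedNbhd G i) (phi G x) hii
    simp only [phi, hSapp] at hsplit ⊢
    rw [Finset.sum_neg_distrib]
    linarith [hsplit]
  have hgoal : phi G x i * Real.exp (-(x i / S i)) *
      ∏ j ∈ (closedNbhd G i).erase i, Real.exp (-(x j / S j))
      = phi G x i * Real.exp (-∑ j ∈ closedNbhd G i, phi G x j) := by
    rw [mul_assoc, ← Real.exp_sum, ← Real.exp_add, ← key]
  exact hgoal ▸ h
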